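/- Let B > 0. There exists a constant C₁ > 0, depending only on q, Q and B, such that every B-bare weighted tree T with ω(T) ≥ C₁ satisfies both ω(v_base) ≥ ω(T) / (log ω(T))^{2B log Q} and D(T) ≥ log ω(T) / (2 log Q). -/

import Mathlib

open MeasureTheory ProbabilityTheory Filter Set Real
open scoped ProbabilityTheory ENNReal

namespace GWW

abbrev Vertex : Type := List ℕ

instance : MeasurableSpace Vertex := ⊤

/-- The root vertex φ. -/
def rootV : Vertex := []

abbrev Conf : Type := (Vertex → ℕ) × (Vertex → ℝ)

/-- The vertex set of the tree coded (in the Neveu–Le Gall formalism) by the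
offspring-count function `K`. -/
def treeSet (K : Vertex → ℕ) : Set Vertex :=
  {u | ∀ j, j < u.length → u.getD j 0 < K (u.take j)}

lemma root_mem_treeSet (K : Vertex → ℕ) : ([] : Vertex) ∈ treeSet K := by
  intro j hj; simp at hj

/-- ω(u) : the product of the biases on the edges of the path from the root to `u`. -/
noncomputable def vWeight (β : Vertex → ℝ) (u : Vertex) : ℝ :=
  ∏ j ∈ Finset.range u.length, β (u.take (j + 1))

/-- ω_w(v) : the product of the biases on the path from `w` to a descendant `v`. -/
noncomputable def vWeightFrom (β : Vertex → ℝ) (w v : Vertex) : ℝ :=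
  ∏ j ∈ Finset.Ico w.length v.length, β (v.take (j + 1))

/-- ω(T) : the total weight of the tree. -/
noncomputable def treeWeight (K : Vertex → ℕ) (β : Vertex → ℝ) : ℝ :=
  ∑' u : treeSet K, vWeight β u

/-- D(T) : the depth of the tree. -/
noncomputable def depth (K : Vertex → ℕ) : ℕ :=
  sSup (List.length '' treeSet K)

/-- v_base : the lexicographically minimal vertex of maximal depth. -/
noncomputable def vbase (K : Vertex → ℕ) : Vertex := by
  classical
  exact if h : {u ∈ treeSet K | u.length = depth K}.Finite ∧
         {u ∈ treeSet K | u.length = depth K}.Nonempty then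
    h.1.toFinset.min' ((Set.Finite.toFinset_nonempty h.1).mpr h.2)
  else []

/-- ψ_i : the i-th vertex on the path from the root to v_base. -/
noncomputable def psiVertex (K : Vertex → ℕ) (i : ℕ) : Vertex := (vbase K).take i

/-- J_i : the i-th outgrowth, i.e. the connected component containing ψ_i of the graph
obtained from T by removing the edges of the path from the root to v_base
(`∅` for `i > D(T)`). -/
noncomputable def outgrowth (K : Vertex → ℕ) (i : ℕ) : Set Vertex :=
  if i ≤ depth K then
    {v ∈ treeSet K | psiVertex K i <+: v ∧ (i = depth K ∨ ¬ psiVertex K (i + 1) <+: v)}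
  else ∅

/-- A weighted tree is B-bare when `|V(J_i)| ≤ B log log ω(T)` for all `0 ≤ i ≤ D(T) - 1`. -/
def Bare (K : Vertex → ℕ) (β : Vertex → ℝ) (B : ℝ) : Prop :=
  ∀ i, i < depth K → ((outgrowth K i).ncard : ℝ) ≤ B * Real.log (Real.log (treeWeight K β))

/-- v_child : the neighbour of the root on the path from the root to v_base. -/
noncomputable def vchild (K : Vertex → ℕ) : Vertex := (vbase K).take 1

/-- The vertex set of the descendent subtree rooted at `w`. -/
def descSet (K : Vertex → ℕ) (w : Vertex) : Set Vertex :=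
  {v ∈ treeSet K | w <+: v}

/-- ω_* : the total weight of the descendent subtree rooted at v_child. -/
noncomputable def omegaStar (K : Vertex → ℕ) (β : Vertex → ℝ) : ℝ :=
  ∑' v : descSet K (vchild K), vWeightFrom β (vchild K) (v : Vertex)

/-- u_k(T) = ω(ψ_{D(T)-k}). -/
noncomputable def uT (K : Vertex → ℕ) (β : Vertex → ℝ) (k : ℕ) : ℝ :=
  vWeight β (psiVertex K (depth K - k))

/-- v_k(T) = Σ_{v ∈ V(E_k)} ω_{ψ_{D(T)-k}}(v). -/
noncomputable def vT (K : Vertex → ℕ) (β : Vertex → ℝ) (k : ℕ) : ℝ :=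
  ∑' v : descSet K (psiVertex K (depth K - k)),
    vWeightFrom β (psiVertex K (depth K - k)) (v : Vertex)

/-- w_k(T) = Σ_{v ∈ V(E_k)} ω(v). -/
noncomputable def wT (K : Vertex → ℕ) (β : Vertex → ℝ) (k : ℕ) : ℝ :=
  ∑' v : descSet K (psiVertex K (depth K - k)), vWeight β (v : Vertex)

/-- The topological support of a measure on ℝ. -/
def measSupport (ν : Measure ℝ) : Set ℝ := {x | ∀ U ∈ nhds x, ν U ≠ 0}

/-- Hypothesis H1 on the offspring distribution. -/
structure OffspringHyp (hOff : ℕ → ℝ) : Prop where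
  nonneg : ∀ k, 0 ≤ hOff k
  total : ∑' k, hOff k = 1
  subcrit : ∑' k : ℕ, (k : ℝ) * hOff k < 1
  tail : ∃ c : ℝ, 0 < c ∧ ∀ k : ℕ, (∑' l : ℕ, if k ≤ l then hOff l else 0) ≤ Real.exp (-c * k)

/-- ν is a probability measure supported in [q,Q]. -/
structure NuSupp (q Q : ℝ) (ν : Measure ℝ) : Prop where
  prob : IsProbabilityMeasure ν
  supp : ν (Set.Icc q Q)ᶜ = 0

/-- Hypothesis H2 : ν is supported in [q,Q], and the ℤ-linear span of the logarithms of
the support of ν is dense in ℝ (non-lattice condition). -/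
structure NuHyp (q Q : ℝ) (ν : Measure ℝ) : Prop where
  prob : IsProbabilityMeasure ν
  supp : ν (Set.Icc q Q)ᶜ = 0
  nonlattice : Dense (↑(AddSubgroup.closure (Real.log '' measSupport ν)) : Set ℝ)

/-- `P` is the law `P_{h,ν}` of the weighted Galton–Watson tree in the Neveu coding:
the offspring counts and the edge biases of all potential vertices are mutually
independent, offspring counts have law `hOff` and biases have law `ν`. -/
def IsGW (hOff : ℕ → ℝ) (ν : Measure ℝ) (P : Measure Conf) : Prop :=
  IsProbabilityMeasure P ∧
  IndepFun Prod.fst Prod.snd P ∧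
  iIndepFun (fun u (ω : Conf) => ω.1 u) P ∧
  iIndepFun (fun u (ω : Conf) => ω.2 u) P ∧
  (∀ u : Vertex, ∀ k : ℕ, P {ω : Conf | ω.1 u = k} = ENNReal.ofReal (hOff k)) ∧
  (∀ u : Vertex, Measure.map (fun ω : Conf => ω.2 u) P = ν)

/-- The sum of the biases towards the children of `v`. -/
noncomputable def childSum (K : Vertex → ℕ) (β : Vertex → ℝ) (v : Vertex) : ℝ :=
  ∑ j ∈ Finset.range (K v), β (v ++ [j])

/-- The one-step transition probabilities of the β-biased random walk. -/
noncomputable def step (K : Vertex → ℕ) (β : Vertex → ℝ) (v w : Vertex) : ℝ := by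
  classical
  exact if v = rootV then
    if ∃ j, j < K v ∧ w = v ++ [j] then β w / childSum K β v else 0
  else
    if w = v.dropLast then 1 / (1 + childSum K β v)
    else if ∃ j, j < K v ∧ w = v ++ [j] then β w / (1 + childSum K β v)
    else 0

/-- `W` is the law of the β-biased random walk on the coded tree started from `start`. -/
def IsWalkLaw (K : Vertex → ℕ) (β : Vertex → ℝ) (start : Vertex)
    (W : Measure (ℕ → Vertex)) : Prop :=
  IsProbabilityMeasure W ∧
  W {x | x 0 = start} = 1 ∧
  ∀ (n : ℕ) (γ : ℕ → Vertex),
    W {x | ∀ i ≤ n + 1, x i = γ i} =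
      W {x | ∀ i ≤ n, x i = γ i} * ENNReal.ofReal (step K β (γ n) (γ (n + 1)))

/-- H_w = inf{n ≥ 1 : X_n = w}. -/
noncomputable def hitTime (x : ℕ → Vertex) (w : Vertex) : ℕ :=
  sInf {n | 1 ≤ n ∧ x n = w}

/-- The deep-excursion event DE = {H_{v_base} < H_φ}. -/
def deepExc (K : Vertex → ℕ) : Set (ℕ → Vertex) :=
  {x | hitTime x (vbase K) < hitTime x rootV}

/-- A configuration on which the walk is well defined: all biases lie in [q,Q] and the
root has at least one child. -/
def ValidConf (q Q : ℝ) (ω : Conf) : Prop :=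
  (∀ u : Vertex, ω.2 u ∈ Set.Icc q Q) ∧ ω.1 rootV ≠ 0

/-- E^φ_{T,β}(H_φ), set to 0 if the tree is the root alone. -/
noncomputable def meanReturn (Wfun : Conf → Vertex → Measure (ℕ → Vertex)) (ω : Conf) : ℝ :=
  if ω.1 rootV = 0 then 0 else ∫ x, (hitTime x rootV : ℝ) ∂(Wfun ω rootV)

/-- E^φ_{T,β,DE}(H_φ) : the mean return time for the walk conditioned to make a
deep excursion. -/
noncomputable def meanReturnDE (Wfun : Conf → Vertex → Measure (ℕ → Vertex)) (ω : Conf) : ℝ :=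
  ∫ x, (hitTime x rootV : ℝ) ∂((Wfun ω rootV)[|deepExc ω.1])

/-- p_de = P^{v_child}_{T,β}(DE). -/
noncomputable def pDE (Wfun : Conf → Vertex → Measure (ℕ → Vertex)) (ω : Conf) : ℝ :=
  ((Wfun ω (vchild ω.1)) (deepExc ω.1)).toReal

/-- `P(f > u) ∼ cst · u^{-χ}` as `u → ∞`. -/
def TailEquiv {α : Type*} [MeasurableSpace α] (P : Measure α) (f : α → ℝ) (cst χ : ℝ) : Prop :=
  Tendsto (fun u : ℝ => (P {a | u < f a}).toReal / (cst * u ^ (-χ))) atTop (nhds 1)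


section BareAux

lemma take_mem_treeSet {K : Vertex → ℕ} {u : Vertex} (hu : u ∈ treeSet K) (m : ℕ) :
    u.take m ∈ treeSet K := by
  intro j hj
  rw [List.length_take] at hj
  have hju : j < u.length := lt_of_lt_of_le hj (min_le_right _ _)
  have hjm : j < m := lt_of_lt_of_le hj (min_le_left _ _)
  have h1 : (u.take m).getD j 0 = u.getD j 0 := by
    rw [List.getD_eq_getElem _ _ (by rw [List.length_take]; omega),
      List.getD_eq_getElem _ _ hju, List.getElem_take]
  have h2 : (u.take m).take j = u.take j := by
    rw [List.take_take, min_eq_left hjm.le]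
  rw [h1, h2]
  exact hu j hju

lemma beta_mem_aux {q Q : ℝ} {K : Vertex → ℕ} {β : Vertex → ℝ}
    (hβ : ∀ u : Vertex, u ∈ treeSet K → u ≠ rootV → β u ∈ Set.Icc q Q)
    {u : Vertex} (hu : u ∈ treeSet K) {j : ℕ} (hj : j < u.length) :
    β (u.take (j + 1)) ∈ Set.Icc q Q := by
  refine hβ _ (take_mem_treeSet hu _) ?_
  have hlen : (u.take (j + 1)).length = j + 1 := by rw [List.length_take]; omega
  intro h
  rw [h] at hlen
  simp [rootV] at hlen

lemma vWeight_pos_aux {q Q : ℝ} (hq : 1 < q) {K : Vertex → ℕ} {β : Vertex → ℝ}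
    (hβ : ∀ u : Vertex, u ∈ treeSet K → u ≠ rootV → β u ∈ Set.Icc q Q)
    {u : Vertex} (hu : u ∈ treeSet K) : 0 < vWeight β u :=
  Finset.prod_pos fun _ hj =>
    lt_of_lt_of_le (zero_lt_one.trans hq) (beta_mem_aux hβ hu (Finset.mem_range.mp hj)).1

lemma vWeight_le_aux {q Q : ℝ} (hq : 1 < q) {K : Vertex → ℕ} {β : Vertex → ℝ}
    (hβ : ∀ u : Vertex, u ∈ treeSet K → u ≠ rootV → β u ∈ Set.Icc q Q)
    {u : Vertex} (hu : u ∈ treeSet K) : vWeight β u ≤ Q ^ u.length := by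
  calc vWeight β u ≤ ∏ _j ∈ Finset.range u.length, Q := by
        refine Finset.prod_le_prod (fun j hj => ?_) (fun j hj => ?_)
        · exact le_trans (zero_lt_one.trans hq).le
            (beta_mem_aux hβ hu (Finset.mem_range.mp hj)).1
        · exact (beta_mem_aux hβ hu (Finset.mem_range.mp hj)).2
    _ = Q ^ u.length := by simp

lemma vWeight_take_mul_aux {β : Vertex → ℝ} {u : Vertex} {i : ℕ} (hi : i ≤ u.length) :
    vWeight β u = vWeight β (u.take i) * ∏ j ∈ Finset.Ico i u.length, β (u.take (j + 1)) := by
  unfold vWeight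
  have h1 : (u.take i).length = i := by rw [List.length_take]; omega
  rw [h1]
  have h2 : ∀ j ∈ Finset.range i, β ((u.take i).take (j + 1)) = β (u.take (j + 1)) := by
    intro j hj
    rw [List.take_take, min_eq_left (by simpa using Finset.mem_range.mp hj : j + 1 ≤ i)]
  rw [Finset.prod_congr rfl h2]
  simp only [Finset.range_eq_Ico]
  exact (Finset.prod_Ico_consecutive (fun j => β (u.take (j + 1))) (Nat.zero_le i) hi).symm

lemma tsum_finite_aux (s : Set Vertex) (hs : s.Finite) (f : Vertex → ℝ) :
    ∑' u : s, f u = ∑ u ∈ hs.toFinset, f u := by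
  have := hs.fintype
  rw [tsum_fintype]
  exact Finset.sum_bij (fun u _ => (u : Vertex)) (by simp) (by simp [Subtype.ext_iff])
    (fun v hv => ⟨⟨v, by simpa using hv⟩, by simp, rfl⟩) (fun _ _ => rfl)

lemma eventually_loglog_le_aux (c s : ℝ) (hc : 0 < c) (hs : 0 < s) :
    ∀ᶠ t : ℝ in atTop, c * Real.log (Real.log t) ≤ Real.log t ^ s := by
  have h := (isLittleO_log_rpow_atTop hs).comp_tendsto Real.tendsto_log_atTop
  have h2 := h.def (show (0:ℝ) < c⁻¹ by positivity)
  have h3 : ∀ᶠ t : ℝ in atTop, 0 ≤ Real.log (Real.log t) :=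
    (Real.tendsto_log_atTop.comp Real.tendsto_log_atTop).eventually_ge_atTop 0
  have h4 : ∀ᶠ t : ℝ in atTop, 0 ≤ Real.log t := Real.tendsto_log_atTop.eventually_ge_atTop 0
  filter_upwards [h2, h3, h4] with t h2 h3 h4
  simp only [Function.comp_apply, Real.norm_eq_abs] at h2
  rw [abs_of_nonneg h3, abs_of_nonneg (Real.rpow_nonneg h4 _)] at h2
  calc c * Real.log (Real.log t) ≤ c * (c⁻¹ * Real.log t ^ s) :=
        mul_le_mul_of_nonneg_left h2 hc.le
    _ = Real.log t ^ s := by field_simp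

end BareAux

/-- for `B > 0` there is `C₁ > 0` such that every `B`-bare weighted tree
with `ω(T) ≥ C₁` satisfies `ω(v_base) ≥ ω(T)/(log ω(T))^{2B log Q}` and
`D(T) ≥ log ω(T)/(2 log Q)`. -/
theorem bare_tree_geometry
    (q Q : ℝ) (hq : 1 < q) (hqQ : q ≤ Q) (B : ℝ) (hB : 0 < B) :
    ∃ C₁ : ℝ, 0 < C₁ ∧
      ∀ (K : Vertex → ℕ) (β : Vertex → ℝ),
        (treeSet K).Finite →
        (∀ u : Vertex, u ∈ treeSet K → u ≠ rootV → β u ∈ Set.Icc q Q) →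
        Bare K β B →
        C₁ ≤ treeWeight K β →
        treeWeight K β / Real.log (treeWeight K β) ^ (2 * B * Real.log Q)
            ≤ vWeight β (vbase K) ∧
          Real.log (treeWeight K β) / (2 * Real.log Q) ≤ (depth K : ℝ) := by
  classical
  have hQ : 1 < Q := lt_of_lt_of_le hq hqQ
  have hQ0 : (0:ℝ) < Q := zero_lt_one.trans hQ
  have hlogQ : 0 < Real.log Q := Real.log_pos hQ
  have hq0 : (0:ℝ) < q := zero_lt_one.trans hq
  have hR0 : 0 < q / (q - 1) := div_pos hq0 (by linarith)
  have hc1 : ∀ᶠ t : ℝ in atTop, 1 ≤ B * Real.log (Real.log t) :=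
    ((Real.tendsto_log_atTop.comp Real.tendsto_log_atTop).const_mul_atTop hB).eventually_ge_atTop 1
  have hc2 := eventually_loglog_le_aux (q / (q - 1) * B) (B * Real.log Q)
    (by positivity) (by positivity)
  have hc3 := eventually_loglog_le_aux (2 * (2 * B * Real.log Q)) 1 (by positivity) one_pos
  obtain ⟨C, hC⟩ := Filter.eventually_atTop.mp
    (hc1.and (hc2.and (hc3.and (Filter.eventually_ge_atTop (3:ℝ)))))
  refine ⟨max C 3, lt_of_lt_of_le (by norm_num) (le_max_right _ _), ?_⟩
  intro K β hfin hβ hbare hwC₁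
  set w := treeWeight K β with hwdef
  clear_value w
  obtain ⟨hcond1, hcond2, hcond3, hw3⟩ := hC w (le_trans (le_max_left _ _) hwC₁)
  have hw1 : (1:ℝ) < w := by linarith
  have hw0 : (0:ℝ) < w := by linarith
  have hlogw : 0 < Real.log w := Real.log_pos hw1
  have hll0 : 0 ≤ Real.log (Real.log w) := by
    by_contra h
    push_neg at h
    nlinarith [hcond1]
  set L := B * Real.log (Real.log w) with hLdef
  clear_value L
  have hL1 : 1 ≤ L := hcond1
  -- basic tree facts
  have hTne : (treeSet K).Nonempty := ⟨[], root_mem_treeSet K⟩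
  set D := depth K with hDdef
  clear_value D
  have hmemD : D ∈ List.length '' treeSet K := by
    rw [hDdef]
    show sSup (List.length '' treeSet K) ∈ List.length '' treeSet K
    exact Nat.sSup_mem (hTne.image _) (hfin.image _).bddAbove
  have hlen_le : ∀ v ∈ treeSet K, v.length ≤ D := by
    intro v hv
    rw [hDdef]
    show v.length ≤ sSup (List.length '' treeSet K)
    exact le_csSup (hfin.image _).bddAbove (Set.mem_image_of_mem _ hv)
  obtain ⟨u₀, hu₀T, hu₀len⟩ := hmemD
  have hAfin : {u ∈ treeSet K | u.length = depth K}.Finite :=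
    hfin.subset (Set.sep_subset _ _)
  have hAne : {u ∈ treeSet K | u.length = depth K}.Nonempty :=
    ⟨u₀, hu₀T, by rw [hu₀len, hDdef]⟩
  have hbA : vbase K ∈ {u ∈ treeSet K | u.length = depth K} := by
    rw [vbase, dif_pos ⟨hAfin, hAne⟩]
    have := hAfin.toFinset.min'_mem ((Set.Finite.toFinset_nonempty hAfin).mpr hAne)
    rwa [Set.Finite.mem_toFinset] at this
  have hbT : vbase K ∈ treeSet K := hbA.1
  have hbD : (vbase K).length = D := by rw [hbA.2, hDdef]
  have hψ : ∀ i, psiVertex K i = (vbase K).take i := fun _ => rfl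
  have hωb : 0 < vWeight β (vbase K) := vWeight_pos_aux hq hβ hbT
  -- outgrowths
  have hJsub : ∀ i, outgrowth K i ⊆ treeSet K := by
    intro i v hv
    rw [outgrowth] at hv
    split at hv
    · exact hv.1
    · exact absurd hv (Set.notMem_empty v)
  have hJfin : ∀ i, (outgrowth K i).Finite := fun i => hfin.subset (hJsub i)
  -- weights of the ψ_i
  have hψw : ∀ i ≤ D, vWeight β ((vbase K).take i) ≤
      vWeight β (vbase K) * q⁻¹ ^ (D - i) := by
    intro i hi
    have hib : i ≤ (vbase K).length := by omega
    have hqpow : (0:ℝ) < q ^ (D - i) := pow_pos hq0 _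
    have key : vWeight β ((vbase K).take i) * q ^ (D - i) ≤ vWeight β (vbase K) := by
      rw [vWeight_take_mul_aux hib]
      refine mul_le_mul_of_nonneg_left ?_ (vWeight_pos_aux hq hβ (take_mem_treeSet hbT i)).le
      calc (q:ℝ) ^ (D - i) = ∏ _j ∈ Finset.Ico i (vbase K).length, q := by
            rw [Finset.prod_const, Nat.card_Ico, hbD]
        _ ≤ ∏ j ∈ Finset.Ico i (vbase K).length, β ((vbase K).take (j + 1)) :=
            Finset.prod_le_prod (fun _ _ => hq0.le)
              (fun j hj => (beta_mem_aux hβ hbT (Finset.mem_Ico.mp hj).2).1)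
    rw [inv_pow, ← div_eq_mul_inv, le_div_iff₀ hqpow]
    exact key
  -- every vertex lies in some outgrowth
  have hcover : ∀ v ∈ treeSet K, ∃ i, i ≤ D ∧ v ∈ outgrowth K i := by
    intro v hv
    have hP0 : (vbase K).take 0 <+: v := by simp
    set i0 := Nat.findGreatest (fun j => (vbase K).take j <+: v) D with hi0
    have hle : i0 ≤ D := hi0 ▸ Nat.findGreatest_le (P := fun j => (vbase K).take j <+: v) D
    refine ⟨i0, hle, ?_⟩
    rw [outgrowth, if_pos (show i0 ≤ depth K by omega)]
    refine ⟨hv, ?_, ?_⟩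
    · rw [hψ]
      exact hi0 ▸ Nat.findGreatest_spec (P := fun j => (vbase K).take j <+: v)
        (Nat.zero_le D) hP0
    · rcases eq_or_lt_of_le hle with h | h
      · exact Or.inl (by rw [h, hDdef])
      · refine Or.inr ?_
        rw [hψ]
        exact Nat.findGreatest_is_greatest (P := fun j => (vbase K).take j <+: v)
          (n := D) (k := i0 + 1) (by omega) (by omega)
  -- outgrowths are pairwise disjoint
  have hdisj2 : ∀ i k, i < k → k ≤ D → ∀ v, v ∈ outgrowth K i → v ∈ outgrowth K k → False := by
    intro i k hik hkD v hvi hvk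
    rw [outgrowth, if_pos (show i ≤ depth K by omega)] at hvi
    rw [outgrowth, if_pos (show k ≤ depth K by omega)] at hvk
    rcases hvi.2.2 with h | h
    · omega
    · refine h ?_
      have h1 : psiVertex K (i + 1) <+: psiVertex K k := by
        rw [hψ, hψ]
        rw [show (vbase K).take (i + 1) = ((vbase K).take k).take (i + 1) by
          rw [List.take_take, min_eq_left (by omega)]]
        exact List.take_prefix _ _
      exact h1.trans hvk.2.1
  -- the key structure of vertices of an outgrowth
  have hcardlen : ∀ i, i ≤ D → ∀ v ∈ outgrowth K i,
      i ≤ v.length ∧ v.length < i + (hJfin i).toFinset.card ∧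
        v.take i = (vbase K).take i := by
    intro i hiD v hv
    have hv' := hv
    rw [outgrowth, if_pos (show i ≤ depth K by omega)] at hv'
    obtain ⟨hvT, hvpre, hvor⟩ := hv'
    rw [hψ] at hvpre
    have hlenpsi : ((vbase K).take i).length = i := by
      rw [List.length_take]; omega
    have hiv : i ≤ v.length := by
      have := hvpre.length_le
      omega
    have hvtake : v.take i = (vbase K).take i := by
      have h := List.prefix_iff_eq_take.mp hvpre
      rw [hlenpsi] at h
      exact h.symm
    refine ⟨hiv, ?_, hvtake⟩
    have hsub : ∀ m ∈ Finset.Icc i v.length, v.take m ∈ (hJfin i).toFinset := by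
      intro m hm
      obtain ⟨him, hmv⟩ := Finset.mem_Icc.mp hm
      rw [Set.Finite.mem_toFinset]
      rw [outgrowth, if_pos (show i ≤ depth K by omega)]
      refine ⟨take_mem_treeSet hvT m, ?_, ?_⟩
      · rw [hψ, ← hvtake,
          show v.take i = (v.take m).take i by rw [List.take_take, min_eq_left him]]
        exact List.take_prefix _ _
      · rcases hvor with h | h
        · exact Or.inl h
        · exact Or.inr fun hpre => h (hpre.trans (List.take_prefix m v))
    have hinj : Set.InjOn (fun m => v.take m) ↑(Finset.Icc i v.length) := by
      intro a ha b hb hab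
      have ha' : i ≤ a ∧ a ≤ v.length := by simpa using ha
      have hb' : i ≤ b ∧ b ≤ v.length := by simpa using hb
      have := congrArg List.length hab
      simp only [List.length_take] at this
      omega
    have hcard := Finset.card_le_card_of_injOn _ hsub hinj
    rw [Nat.card_Icc] at hcard
    omega
  -- bound the sum over one outgrowth
  have hsumJ : ∀ i, i ≤ D → ∑ v ∈ (hJfin i).toFinset, vWeight β v ≤
      ((hJfin i).toFinset.card : ℝ) *
        (Q ^ (hJfin i).toFinset.card * vWeight β ((vbase K).take i)) := by
    intro i hiD
    have hbound : ∀ v ∈ (hJfin i).toFinset,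
        vWeight β v ≤ Q ^ (hJfin i).toFinset.card * vWeight β ((vbase K).take i) := by
      intro v hv
      rw [Set.Finite.mem_toFinset] at hv
      obtain ⟨hiv, hlt, hvtake⟩ := hcardlen i hiD v hv
      have hvT : v ∈ treeSet K := hJsub i hv
      calc vWeight β v
          = vWeight β (v.take i) * ∏ j ∈ Finset.Ico i v.length, β (v.take (j + 1)) :=
            vWeight_take_mul_aux hiv
        _ ≤ vWeight β ((vbase K).take i) * Q ^ (hJfin i).toFinset.card := by
            rw [hvtake]
            refine mul_le_mul_of_nonneg_left ?_
              (vWeight_pos_aux hq hβ (take_mem_treeSet hbT i)).le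
            calc ∏ j ∈ Finset.Ico i v.length, β (v.take (j + 1))
                ≤ ∏ _j ∈ Finset.Ico i v.length, Q :=
                  Finset.prod_le_prod
                    (fun j hj => le_trans hq0.le
                      (beta_mem_aux hβ hvT (Finset.mem_Ico.mp hj).2).1)
                    (fun j hj => (beta_mem_aux hβ hvT (Finset.mem_Ico.mp hj).2).2)
              _ = Q ^ (v.length - i) := by rw [Finset.prod_const, Nat.card_Ico]
              _ ≤ Q ^ (hJfin i).toFinset.card := pow_le_pow_right₀ hQ.le (by omega)
        _ = Q ^ (hJfin i).toFinset.card * vWeight β ((vbase K).take i) := mul_comm _ _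
    calc ∑ v ∈ (hJfin i).toFinset, vWeight β v
        ≤ (hJfin i).toFinset.card •
            (Q ^ (hJfin i).toFinset.card * vWeight β ((vbase K).take i)) :=
          Finset.sum_le_card_nsmul _ _ _ hbound
      _ = _ := by rw [nsmul_eq_mul]
  -- cardinality of each outgrowth is at most L
  have hcardL : ∀ i, i ≤ D → ((hJfin i).toFinset.card : ℝ) ≤ L := by
    intro i hiD
    rcases lt_or_eq_of_le hiD with h | h
    · have hb' := hbare i (by omega)
      rw [Set.ncard_eq_toFinset_card _ (hJfin i)] at hb'
      rw [hLdef, hwdef]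
      exact hb'
    · have hsub : (hJfin i).toFinset ⊆ {vbase K} := by
        intro v hv
        rw [Set.Finite.mem_toFinset] at hv
        have hvT : v ∈ treeSet K := hJsub i hv
        rw [outgrowth, if_pos (show i ≤ depth K by omega)] at hv
        obtain ⟨-, hvpre, -⟩ := hv
        rw [hψ, h] at hvpre
        rw [show (vbase K).take D = vbase K by rw [← hbD]; exact List.take_length] at hvpre
        have hvlen := hlen_le v hvT
        rw [Finset.mem_singleton]
        exact (hvpre.eq_of_length_le (by omega)).symm
      have hc := Finset.card_le_card hsub
      simp only [Finset.card_singleton] at hc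
      calc ((hJfin i).toFinset.card : ℝ) ≤ 1 := by exact_mod_cast hc
        _ ≤ L := hL1
  -- per-index bound with the geometric factor
  set M := L * Q ^ L with hMdef
  clear_value M
  have hM0 : 0 ≤ M := by
    rw [hMdef]
    exact mul_nonneg (by linarith) (Real.rpow_nonneg hQ0.le _)
  have hterm : ∀ i ∈ Finset.range (D + 1),
      ∑ v ∈ (hJfin i).toFinset, vWeight β v ≤
        M * (vWeight β (vbase K) * q⁻¹ ^ (D - i)) := by
    intro i hi
    have hiD : i ≤ D := by have := Finset.mem_range.mp hi; omega
    refine le_trans (hsumJ i hiD) ?_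
    have hψpos := vWeight_pos_aux hq hβ (take_mem_treeSet hbT i)
    have h1 : (Q:ℝ) ^ (hJfin i).toFinset.card ≤ Q ^ L := by
      rw [← Real.rpow_natCast Q]
      exact Real.rpow_le_rpow_of_exponent_le hQ.le (hcardL i hiD)
    calc ((hJfin i).toFinset.card : ℝ) *
          (Q ^ (hJfin i).toFinset.card * vWeight β ((vbase K).take i))
        ≤ L * (Q ^ L * (vWeight β (vbase K) * q⁻¹ ^ (D - i))) := by
          refine mul_le_mul (hcardL i hiD)
            (mul_le_mul h1 (hψw i hiD) hψpos.le (Real.rpow_nonneg hQ0.le _))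
            (mul_nonneg (pow_nonneg hQ0.le _) hψpos.le) (by linarith)
      _ = M * (vWeight β (vbase K) * q⁻¹ ^ (D - i)) := by rw [hMdef]; ring
  -- pairwise disjointness, Finset version
  have hdisjP : (↑(Finset.range (D + 1)) : Set ℕ).PairwiseDisjoint
      (fun i => (hJfin i).toFinset) := by
    intro a ha b hb hab
    simp only [Function.onFun, Finset.disjoint_left]
    intro v hva hvb
    rw [Set.Finite.mem_toFinset] at hva hvb
    have ha' : a < D + 1 := by simpa using ha
    have hb' : b < D + 1 := by simpa using hb
    rcases lt_or_gt_of_ne hab with h | h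
    · exact hdisj2 a b h (by omega) v hva hvb
    · exact hdisj2 b a h (by omega) v hvb hva
  -- main summation bound
  have hsum_main : w ≤ M * vWeight β (vbase K) * (q / (q - 1)) := by
    have e1 : w = ∑ v ∈ hfin.toFinset, vWeight β v := by
      rw [hwdef]
      show (∑' u : treeSet K, vWeight β u) = _
      exact tsum_finite_aux _ hfin _
    have e2 : ∑ v ∈ hfin.toFinset, vWeight β v ≤
        ∑ i ∈ Finset.range (D + 1), ∑ v ∈ (hJfin i).toFinset, vWeight β v := by
      rw [← Finset.sum_biUnion hdisjP]
      refine Finset.sum_le_sum_of_subset_of_nonneg ?_ ?_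
      · intro v hv
        rw [Set.Finite.mem_toFinset] at hv
        obtain ⟨i, hiD, hvi⟩ := hcover v hv
        exact Finset.mem_biUnion.mpr ⟨i, Finset.mem_range.mpr (by omega),
          (hJfin i).mem_toFinset.mpr hvi⟩
      · intro v hv _
        obtain ⟨i, -, hvJ⟩ := Finset.mem_biUnion.mp hv
        exact (vWeight_pos_aux hq hβ (hJsub i ((Set.Finite.mem_toFinset _).mp hvJ))).le
    have e3 : ∑ i ∈ Finset.range (D + 1), ∑ v ∈ (hJfin i).toFinset, vWeight β v ≤
        ∑ i ∈ Finset.range (D + 1), M * (vWeight β (vbase K) * q⁻¹ ^ (D - i)) :=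
      Finset.sum_le_sum hterm
    have e4 : ∑ i ∈ Finset.range (D + 1), M * (vWeight β (vbase K) * q⁻¹ ^ (D - i)) =
        M * vWeight β (vbase K) * ∑ i ∈ Finset.range (D + 1), q⁻¹ ^ (D - i) := by
      simp only [Finset.mul_sum, mul_assoc]
    have e5 : ∑ i ∈ Finset.range (D + 1), q⁻¹ ^ (D - i) ≤ q / (q - 1) := by
      have hrefl := Finset.sum_range_reflect (fun i => (q⁻¹ : ℝ) ^ i) (D + 1)
      have hre : ∑ i ∈ Finset.range (D + 1), (q⁻¹ : ℝ) ^ (D - i) =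
          ∑ i ∈ Finset.range (D + 1), (q⁻¹ : ℝ) ^ i := by
        rw [← hrefl]
        exact Finset.sum_congr rfl fun i hi => by norm_num
      rw [hre]
      have hgeo : HasSum (fun n : ℕ => (q⁻¹ : ℝ) ^ n) (1 - q⁻¹)⁻¹ :=
        hasSum_geometric_of_lt_one (by positivity) (inv_lt_one_of_one_lt₀ hq)
      refine le_trans (sum_le_hasSum (Finset.range (D + 1)) (fun i _ => by positivity) hgeo)
        (le_of_eq ?_)
      rw [show (1 : ℝ) - q⁻¹ = (q - 1) / q by field_simp, inv_div]
    calc w = ∑ v ∈ hfin.toFinset, vWeight β v := e1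
      _ ≤ ∑ i ∈ Finset.range (D + 1), ∑ v ∈ (hJfin i).toFinset, vWeight β v := e2
      _ ≤ ∑ i ∈ Finset.range (D + 1), M * (vWeight β (vbase K) * q⁻¹ ^ (D - i)) := e3
      _ = M * vWeight β (vbase K) * ∑ i ∈ Finset.range (D + 1), q⁻¹ ^ (D - i) := e4
      _ ≤ M * vWeight β (vbase K) * (q / (q - 1)) :=
          mul_le_mul_of_nonneg_left e5 (mul_nonneg hM0 hωb.le)
  -- translate Q ^ L into a power of log w
  have hQL : Q ^ L = Real.log w ^ (B * Real.log Q) := by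
    rw [Real.rpow_def_of_pos hQ0, Real.rpow_def_of_pos hlogw, hLdef]
    congr 1
    ring
  have hc2' : q / (q - 1) * L ≤ Real.log w ^ (B * Real.log Q) := by
    rw [hLdef, ← mul_assoc]
    exact hcond2
  have hfinal : w ≤ Real.log w ^ (2 * B * Real.log Q) * vWeight β (vbase K) := by
    have h1 : M * (q / (q - 1)) ≤
        Real.log w ^ (B * Real.log Q) * Real.log w ^ (B * Real.log Q) := by
      rw [hMdef, hQL]
      calc L * Real.log w ^ (B * Real.log Q) * (q / (q - 1))
          = q / (q - 1) * L * Real.log w ^ (B * Real.log Q) := by ring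
        _ ≤ Real.log w ^ (B * Real.log Q) * Real.log w ^ (B * Real.log Q) :=
            mul_le_mul_of_nonneg_right hc2' (Real.rpow_nonneg hlogw.le _)
    have h2 : Real.log w ^ (B * Real.log Q) * Real.log w ^ (B * Real.log Q) =
        Real.log w ^ (2 * B * Real.log Q) := by
      rw [← Real.rpow_add hlogw]
      congr 1
      ring
    calc w ≤ M * vWeight β (vbase K) * (q / (q - 1)) := hsum_main
      _ = M * (q / (q - 1)) * vWeight β (vbase K) := by ring
      _ ≤ Real.log w ^ (2 * B * Real.log Q) * vWeight β (vbase K) := by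
          rw [← h2]
          exact mul_le_mul_of_nonneg_right h1 hωb.le
  constructor
  · rw [div_le_iff₀ (Real.rpow_pos_of_pos hlogw _)]
    exact le_trans hfinal (le_of_eq (mul_comm _ _))
  · have hlow : Real.log w ^ (2 * B * Real.log Q) ≤ w ^ ((1:ℝ)/2) := by
      rw [Real.rpow_def_of_pos hlogw, Real.rpow_def_of_pos hw0]
      refine Real.exp_le_exp.mpr ?_
      have h3 := hcond3
      rw [Real.rpow_one] at h3
      calc Real.log (Real.log w) * (2 * B * Real.log Q)
          = 2 * (2 * B * Real.log Q) * Real.log (Real.log w) / 2 := by ring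
        _ ≤ Real.log w / 2 := by linarith only [h3]
        _ = Real.log w * (1 / 2) := by ring
    have hQD : vWeight β (vbase K) ≤ Q ^ D := by
      have := vWeight_le_aux hq hβ hbT
      rwa [hbD] at this
    have hhalf : w ^ ((1:ℝ)/2) ≤ Q ^ D := by
      have h1 : w ≤ w ^ ((1:ℝ)/2) * Q ^ D :=
        le_trans hfinal (mul_le_mul hlow hQD hωb.le (Real.rpow_nonneg hw0.le _))
      have h2 : w ^ ((1:ℝ)/2) * w ^ ((1:ℝ)/2) = w := by
        rw [← Real.rpow_add hw0]
        norm_num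
      have h3 : 0 < w ^ ((1:ℝ)/2) := Real.rpow_pos_of_pos hw0 _
      nlinarith [h1, h2, h3]
    have hlog := Real.log_le_log (Real.rpow_pos_of_pos hw0 _) hhalf
    rw [Real.log_rpow hw0, Real.log_pow] at hlog
    rw [div_le_iff₀ (by positivity : (0:ℝ) < 2 * Real.log Q)]
    nlinarith [hlog]

end GWW
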